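/- For all natural numbers m and r there exists a natural number N = N(m, r) such that the following holds: if H is a group generated by a finite subset S with |S| ≤ m, such that S is closed under conjugation (h s h⁻¹ ∈ S for every h ∈ H and s ∈ S) and every element of S has order at most r, then H is finite with |H| ≤ N. -/

import Mathlib

open Subgroup
open scoped commutatorElement

/-- Inverses lie in the submonoid closure of a set of torsion elements. -/
private lemma aux_inv_mem_submonoidClosure {G : Type*} [Group G] {S : Set G}
    (hS : ∀ s ∈ S, 0 < orderOf s) {x : G} (hx : x ∈ Submonoid.closure S) :
    x⁻¹ ∈ Submonoid.closure S := by
  induction hx using Submonoid.closure_induction with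
  | mem s hs =>
      have h1 : s ^ (orderOf s - 1) * s = 1 := by
        rw [← pow_succ, Nat.sub_add_cancel (hS s hs)]
        exact pow_orderOf_eq_one s
      rw [inv_eq_of_mul_eq_one_left h1]
      exact Submonoid.pow_mem _ (Submonoid.subset_closure hs) _
  | one => simpa using Submonoid.one_mem _
  | mul a b _ _ ha hb => rw [mul_inv_rev]; exact Submonoid.mul_mem _ hb ha

private lemma aux_mem_submonoidClosure {G : Type*} [Group G] {S : Set G}
    (hS : ∀ s ∈ S, 0 < orderOf s) (hgen : Subgroup.closure S = ⊤) (x : G) :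
    x ∈ Submonoid.closure S := by
  let K : Subgroup G :=
    { Submonoid.closure S with
      inv_mem' := fun h => aux_inv_mem_submonoidClosure hS h }
  have hle : Subgroup.closure S ≤ K := (Subgroup.closure_le K).mpr Submonoid.subset_closure
  have : x ∈ Subgroup.closure S := by rw [hgen]; trivial
  exact hle this

/-- Bound for commutative groups generated by few elements of bounded order. -/
private lemma aux_comm_bound {A : Type*} [CommGroup A] (T : Finset A) (r : ℕ)
    (hgen : Subgroup.closure (T : Set A) = ⊤)
    (hord : ∀ t ∈ T, 0 < orderOf t ∧ orderOf t ≤ r) :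
    Finite A ∧ Nat.card A ≤ (r + 1) ^ T.card := by
  classical
  set f : (↥T → Fin (r + 1)) → A := fun g => ∏ t ∈ T.attach, (t : A) ^ ((g t : ℕ)) with hf
  have hsurj : Function.Surjective f := by
    intro a
    have ha : a ∈ Submonoid.closure (T : Set A) :=
      aux_mem_submonoidClosure (fun s hs => (hord s hs).1) hgen a
    obtain ⟨l, hl, hprod⟩ := Submonoid.exists_multiset_of_mem_closure ha
    refine ⟨fun t => ⟨l.count (t : A) % orderOf (t : A), ?_⟩, ?_⟩
    · have h1 : l.count (t : A) % orderOf (t : A) < orderOf (t : A) :=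
        Nat.mod_lt _ (hord _ t.2).1
      exact lt_of_lt_of_le h1 (le_trans (hord _ t.2).2 (Nat.le_succ r))
    · have step1 : f (fun t => ⟨l.count (t : A) % orderOf (t : A), by
        exact lt_of_lt_of_le (Nat.mod_lt _ (hord _ t.2).1)
          (le_trans (hord _ t.2).2 (Nat.le_succ r))⟩) =
          ∏ t ∈ T.attach, (t : A) ^ (l.count (t : A)) := by
        refine Finset.prod_congr rfl fun t _ => ?_
        exact pow_mod_orderOf _ _
      rw [step1, Finset.prod_attach T (fun a => a ^ l.count a)]
      have hsub : l.toFinset ⊆ T := fun a hmem => hl a (Multiset.mem_toFinset.mp hmem)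
      rw [← Finset.prod_multiset_count_of_subset l T hsub]
      exact hprod
  have hfin : Finite A := Finite.of_surjective f hsurj
  refine ⟨hfin, ?_⟩
  have := Nat.card_le_card_of_surjective f hsurj
  rwa [Nat.card_fun, Nat.card_eq_fintype_card (α := Fin (r + 1)), Fintype.card_fin,
    Nat.card_eq_fintype_card (α := ↥T), Fintype.card_coe] at this

private lemma aux_central_conj {H : Type*} [Group H] {z : H}
    (hz : z ∈ Subgroup.center H) (x : H) : z * x * z⁻¹ = x := by
  rw [← Subgroup.mem_center_iff.mp hz x, mul_assoc, mul_inv_cancel, mul_one]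

private lemma aux_commutator_central {H : Type*} [Group H] {z w : H}
    (hz : z ∈ Subgroup.center H) (hw : w ∈ Subgroup.center H) (g h : H) :
    ⁅g * z, h * w⁆ = ⁅g, h⁆ := by
  simp only [commutatorElement_def]
  have e1 : g * z * (h * w) * (g * z)⁻¹ = g * (h * w) * g⁻¹ := by
    rw [mul_inv_rev]
    calc g * z * (h * w) * (z⁻¹ * g⁻¹) = g * (z * (h * w) * z⁻¹) * g⁻¹ := by
          simp [mul_assoc]
      _ = g * (h * w) * g⁻¹ := by rw [aux_central_conj hz]
  rw [e1]
  have c1 : h * w = w * h := Subgroup.mem_center_iff.mp hw h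
  have c2 : g * w = w * g := Subgroup.mem_center_iff.mp hw g
  calc g * (h * w) * g⁻¹ * (h * w)⁻¹
      = w * (g * h * g⁻¹ * h⁻¹) * w⁻¹ := by
        rw [c1, mul_inv_rev]
        simp only [← mul_assoc]
        rw [c2]
    _ = g * h * g⁻¹ * h⁻¹ := aux_central_conj hw _

/-- **Uniform finiteness of groups generated by a bounded conjugation-invariant set
of elements of bounded order.**
For all `m, r : ℕ` there is `N = N(m, r)` such that any group `H` generated by a
finite subset `S` with `|S| ≤ m` which is closed under conjugation and consists of
elements of (finite) order at most `r` is finite of cardinality at most `N`. -/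
theorem exists_card_bound_of_conjInvariant_generators (m r : ℕ) :
    ∃ N : ℕ, ∀ (H : Type*) [Group H] (S : Finset H),
      S.card ≤ m →
      Subgroup.closure (S : Set H) = ⊤ →
      (∀ h : H, ∀ s ∈ S, h * s * h⁻¹ ∈ S) →
      (∀ s ∈ S, 0 < orderOf s ∧ orderOf s ≤ r) →
      Finite H ∧ Nat.card H ≤ N := by
  classical
  set M : ℕ := (m + 1) ^ m with hM
  set B : ℕ := (Finset.range (M * M + 1)).sup Subgroup.cardCommutatorBound with hB
  refine ⟨B * (r + 1) ^ m, ?_⟩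
  intro H _ S hcard hgen hconj hord
  set Z := Subgroup.center H with hZ
  -- the conjugation action on S
  set u : H → (↥S → ↥S) := fun h s => ⟨h * (s : H) * h⁻¹, hconj h s s.2⟩ with hu
  have hker : ∀ h₁ h₂ : H, u h₁ = u h₂ → h₁⁻¹ * h₂ ∈ Z := by
    intro h₁ h₂ he
    rw [hZ, Subgroup.mem_center_iff]
    set z := h₁⁻¹ * h₂ with hz
    have hSz : ∀ s ∈ S, s * z = z * s := by
      intro s hs
      have h3 : h₁ * s * h₁⁻¹ = h₂ * s * h₂⁻¹ := by
        have := congrFun he ⟨s, hs⟩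
        exact Subtype.ext_iff.mp this
      have h3' : h₁ * s * h₁⁻¹ * h₂ = h₂ * s := by rw [h3]; simp [mul_assoc]
      have h5 := congrArg (fun x => h₁⁻¹ * x) h3'
      simpa [hz, mul_assoc] using h5
    intro g
    have hg : g ∈ Subgroup.closure (S : Set H) := by rw [hgen]; trivial
    induction hg using Subgroup.closure_induction with
    | mem s hs => exact hSz s hs
    | one => simp
    | mul a b _ _ ha hb => rw [mul_assoc, hb, ← mul_assoc, ha, mul_assoc]
    | inv a _ ha =>
        have := congrArg (fun x => a⁻¹ * x * a⁻¹) ha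
        simpa [mul_assoc] using this.symm
  -- the quotient by the center is small
  set q : H ⧸ Z → (↥S → ↥S) := fun x => u x.out with hq
  have hqinj : Function.Injective q := by
    intro x y h
    have h1 : x.out⁻¹ * y.out ∈ Z := hker _ _ h
    have h2 : (x.out : H ⧸ Z) = (y.out : H ⧸ Z) := (QuotientGroup.eq ).mpr h1
    rwa [QuotientGroup.out_eq', QuotientGroup.out_eq'] at h2
  have hSfin : Finite (↥S → ↥S) := by infer_instance
  have hQfin : Finite (H ⧸ Z) := Finite.of_injective q hqinj
  have hQcard : Nat.card (H ⧸ Z) ≤ M := by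
    have h1 := Nat.card_le_card_of_injective q hqinj
    rw [Nat.card_fun, Nat.card_eq_fintype_card (α := ↥S), Fintype.card_coe] at h1
    refine h1.trans ?_
    calc S.card ^ S.card ≤ (m + 1) ^ S.card :=
          Nat.pow_le_pow_left (hcard.trans (Nat.le_succ m)) _
      _ ≤ (m + 1) ^ m := Nat.pow_le_pow_right (Nat.succ_pos m) hcard
  -- commutator set is small
  set v : (H ⧸ Z) × (H ⧸ Z) → H := fun p => ⁅p.1.out, p.2.out⁆ with hv
  have hvsub : commutatorSet H ⊆ Set.range v := by
    rintro x ⟨a, b, rfl⟩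
    refine ⟨((a : H ⧸ Z), (b : H ⧸ Z)), ?_⟩
    have ha : a⁻¹ * (((a : H ⧸ Z)).out) ∈ Z := by
      rw [← QuotientGroup.eq]
      exact (QuotientGroup.out_eq' _).symm
    have hb : b⁻¹ * (((b : H ⧸ Z)).out) ∈ Z := by
      rw [← QuotientGroup.eq]
      exact (QuotientGroup.out_eq' _).symm
    have ea : ((a : H ⧸ Z)).out = a * (a⁻¹ * ((a : H ⧸ Z)).out) := by
      simp [mul_assoc]
    have eb : ((b : H ⧸ Z)).out = b * (b⁻¹ * ((b : H ⧸ Z)).out) := by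
      simp [mul_assoc]
    show ⁅((a : H ⧸ Z)).out, ((b : H ⧸ Z)).out⁆ = ⁅a, b⁆
    rw [ea, eb]
    exact aux_commutator_central ha hb a b
  have hrangefin : (Set.range v).Finite := Set.finite_range v
  have hcommfin : Finite (commutatorSet H) :=
    (hrangefin.subset hvsub).to_subtype
  have hcommcard : Nat.card (commutatorSet H) ≤ M * M := by
    have h1 : Nat.card (commutatorSet H) ≤ Nat.card (Set.range v) :=
      Nat.card_mono hrangefin hvsub
    have h2 : Nat.card (Set.range v) ≤ Nat.card ((H ⧸ Z) × (H ⧸ Z)) :=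
      Nat.card_le_card_of_surjective _ Set.rangeFactorization_surjective
    refine h1.trans (h2.trans ?_)
    rw [Nat.card_prod]
    exact Nat.mul_le_mul hQcard hQcard
  -- Schur: the commutator subgroup is small
  have hcommutator_card : Nat.card (commutator H) ≤ B := by
    refine (Subgroup.card_commutator_le_of_finite_commutatorSet H).trans ?_
    exact Finset.le_sup (Finset.mem_range.mpr (Nat.lt_succ_of_le hcommcard))
  have hcommutator_fin : Finite (commutator H) := inferInstance
  -- the abelianization is small
  set T : Finset (Abelianization H) := S.image (Abelianization.of) with hT
  have hTgen : Subgroup.closure (T : Set (Abelianization H)) = ⊤ := by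
    rw [hT, Finset.coe_image, ← MonoidHom.map_closure, hgen]
    exact Subgroup.map_top_of_surjective _ (fun x =>
      Quotient.inductionOn' x fun a => ⟨a, rfl⟩)
  have hTord : ∀ t ∈ T, 0 < orderOf t ∧ orderOf t ≤ r := by
    intro t ht
    obtain ⟨s, hs, rfl⟩ := Finset.mem_image.mp ht
    have hdvd := orderOf_map_dvd (Abelianization.of (G := H)) s
    have hne : orderOf s ≠ 0 := Nat.pos_iff_ne_zero.mp (hord s hs).1
    constructor
    · rcases Nat.eq_zero_or_pos (orderOf (Abelianization.of s)) with h | h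
      · exact absurd (zero_dvd_iff.mp (h ▸ hdvd)) hne
      · exact h
    · exact (Nat.le_of_dvd (hord s hs).1 hdvd).trans (hord s hs).2
  obtain ⟨hAfin, hAcard⟩ := aux_comm_bound T r hTgen hTord
  have hAcard' : Nat.card (Abelianization H) ≤ (r + 1) ^ m := by
    refine hAcard.trans (Nat.pow_le_pow_right (Nat.succ_pos r) ?_)
    exact (Finset.card_image_le).trans hcard
  -- conclude
  have hQfin' : Finite (H ⧸ commutator H) := hAfin
  have hHfin : Finite H :=
    Finite.of_equiv _ (Subgroup.groupEquivQuotientProdSubgroup (s := commutator H)).symm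
  refine ⟨hHfin, ?_⟩
  rw [card_eq_card_quotient_mul_card_subgroup (commutator H)]
  have : Nat.card (H ⧸ commutator H) ≤ (r + 1) ^ m := hAcard'
  calc Nat.card (H ⧸ commutator H) * Nat.card (commutator H)
      ≤ (r + 1) ^ m * B := Nat.mul_le_mul this hcommutator_card
    _ = B * (r + 1) ^ m := Nat.mul_comm _ _
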